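/- arXiv:1111.2467 — 4 statements merged into one kernel-verified Lean document; each statement's English description precedes it below -/
import Mathlib

section
/- Let f : ℝ → ℂ be an almost periodic function (i.e., f belongs to the closure, in the Banach space of bounded continuous functions ℝ → ℂ with the supremum norm, of the linear span of the functions y ↦ exp(iλy), λ ∈ ℝ). If f(y) → 0 as y → +∞ and as y → −∞, then f is identically zero. -/
open Complex Filter

lemma recur_exp {α : Type*} (s : Finset α) (lam : α → ℝ) {ε : ℝ} (hε : 0 < ε) (T : ℝ) :
    ∃ t : ℝ, T ≤ t ∧ ∀ j ∈ s, ‖Complex.exp (Complex.I * lam j * t) - 1‖ < ε := by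
  set T' : ℝ := max T 1 with hT'
  set u : ℕ → (s → ℂ) := fun k j => Complex.exp (Complex.I * lam j * (k * T')) with hu
  have hub : ∀ k, u k ∈ Metric.closedBall (0 : s → ℂ) 1 := by
    intro k
    rw [Metric.mem_closedBall, dist_zero_right]
    refine (pi_norm_le_iff_of_nonneg zero_le_one).2 fun j => ?_
    simp only [hu, Complex.norm_exp]
    have : (Complex.I * lam j * (k * T')).re = 0 := by
      simp [Complex.mul_re, Complex.mul_im]
    rw [this, Real.exp_zero]
  obtain ⟨b, _, φ, hφ, hconv⟩ :=
    tendsto_subseq_of_bounded Metric.isBounded_closedBall hub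
  rw [Metric.tendsto_atTop] at hconv
  obtain ⟨N, hN⟩ := hconv (ε / 2) (half_pos hε)
  have h1 : dist (u (φ N)) (u (φ (N + 1))) < ε := by
    calc dist (u (φ N)) (u (φ (N + 1))) ≤ dist (u (φ N)) b + dist (u (φ (N + 1))) b :=
          dist_triangle_right _ _ _
      _ < ε / 2 + ε / 2 := add_lt_add (hN N le_rfl) (hN (N + 1) (by omega))
      _ = ε := add_halves ε
  set a := φ N
  set c := φ (N + 1)
  have hac : a < c := hφ (by omega)
  refine ⟨((c - a : ℕ) : ℝ) * T', ?_, ?_⟩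
  · have h1' : (1 : ℝ) ≤ ((c - a : ℕ) : ℝ) := by
      have : 1 ≤ c - a := by omega
      exact_mod_cast this
    calc T ≤ T' := le_max_left _ _
      _ = 1 * T' := (one_mul _).symm
      _ ≤ ((c - a : ℕ) : ℝ) * T' := by
          apply mul_le_mul_of_nonneg_right h1' (le_trans zero_le_one (le_max_right _ _))
  · intro j hj
    push_cast
    have key : Complex.exp (Complex.I * lam j * (c * T')) -
        Complex.exp (Complex.I * lam j * (a * T')) =
        Complex.exp (Complex.I * lam j * (a * T')) *
          (Complex.exp (Complex.I * lam j * (((c - a : ℕ) : ℝ) * T')) - 1) := by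
      rw [mul_sub, mul_one, ← Complex.exp_add]
      congr 2
      push_cast [Nat.cast_sub hac.le]
      ring
    have habs1 : ‖Complex.exp (Complex.I * lam j * (a * T'))‖ = 1 := by
      rw [Complex.norm_exp]
      have : (Complex.I * lam j * (a * T')).re = 0 := by
        simp [Complex.mul_re, Complex.mul_im]
      rw [this, Real.exp_zero]
    have := dist_le_pi_dist (u a) (u c) ⟨j, hj⟩
    rw [show dist (u a) (u c) = dist (u (φ N)) (u (φ (N+1))) from rfl] at this
    have hlt : dist (u a ⟨j, hj⟩) (u c ⟨j, hj⟩) < ε := lt_of_le_of_lt this h1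
    calc ‖Complex.exp (Complex.I * lam j * (((c - a : ℕ) : ℝ) * T')) - 1‖
        = ‖Complex.exp (Complex.I * lam j * (c * T')) -
            Complex.exp (Complex.I * lam j * (a * T'))‖ := by
          rw [key, norm_mul, habs1, one_mul]
      _ = dist (u c ⟨j, hj⟩) (u a ⟨j, hj⟩) := by
          rw [Complex.dist_eq]
      _ = dist (u a ⟨j, hj⟩) (u c ⟨j, hj⟩) := dist_comm _ _
      _ < ε := hlt

lemma span_translate (g : BoundedContinuousFunction ℝ ℂ)
    (hg : g ∈ Submodule.span ℂ
      {g : BoundedContinuousFunction ℝ ℂ |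
        ∃ lam : ℝ, ∀ y : ℝ, g y = Complex.exp (Complex.I * lam * y)})
    {ε : ℝ} (hε : 0 < ε) (T : ℝ) :
    ∃ t : ℝ, T ≤ t ∧ ∀ y : ℝ, ‖g (y + t) - g y‖ ≤ ε := by
  rw [Submodule.mem_span_set] at hg
  obtain ⟨c, hsupp, hsum⟩ := hg
  classical
  set lam : BoundedContinuousFunction ℝ ℂ → ℝ := fun i =>
    if h : ∃ l : ℝ, ∀ y : ℝ, i y = Complex.exp (Complex.I * l * y) then h.choose else 0
    with hlam
  have hlam_spec : ∀ i ∈ c.support, ∀ y : ℝ,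
      i y = Complex.exp (Complex.I * lam i * y) := by
    intro i hi y
    have h : ∃ l : ℝ, ∀ y : ℝ, i y = Complex.exp (Complex.I * l * y) := hsupp hi
    simp only [hlam, dif_pos h]
    exact h.choose_spec y
  set C : ℝ := ∑ i ∈ c.support, ‖c i‖ with hC
  have hC0 : 0 ≤ C := Finset.sum_nonneg fun i _ => norm_nonneg _
  have hε' : 0 < ε / (C + 1) := div_pos hε (by linarith)
  obtain ⟨t, hTt, ht⟩ := recur_exp c.support lam hε' T
  refine ⟨t, hTt, fun y => ?_⟩
  have heval : ∀ z : ℝ, g z = ∑ i ∈ c.support, c i * i z := by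
    intro z
    rw [← hsum]
    rw [Finsupp.sum]
    simp [BoundedContinuousFunction.coe_sum, Finset.sum_apply]
  rw [heval, heval, ← Finset.sum_sub_distrib]
  calc ‖∑ i ∈ c.support, (c i * i (y + t) - c i * i y)‖
      ≤ ∑ i ∈ c.support, ‖c i * i (y + t) - c i * i y‖ := by
        exact norm_sum_le _ _
    _ ≤ ∑ i ∈ c.support, ‖c i‖ * (ε / (C + 1)) := by
        refine Finset.sum_le_sum fun i hi => ?_
        have h1 : i (y + t) = Complex.exp (Complex.I * lam i * y) *
            Complex.exp (Complex.I * lam i * t) := by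
          rw [hlam_spec i hi, ← Complex.exp_add]
          congr 1
          push_cast
          ring
        rw [h1, hlam_spec i hi]
        have : c i * (Complex.exp (Complex.I * lam i * y) * Complex.exp (Complex.I * lam i * t)) -
            c i * Complex.exp (Complex.I * lam i * y) =
            c i * Complex.exp (Complex.I * lam i * y) *
              (Complex.exp (Complex.I * lam i * t) - 1) := by ring
        rw [this, norm_mul, norm_mul]
        have habs1 : ‖Complex.exp (Complex.I * lam i * y)‖ = 1 := by
          rw [Complex.norm_exp]
          have : (Complex.I * lam i * y).re = 0 := by
            simp [Complex.mul_re, Complex.mul_im]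
          rw [this, Real.exp_zero]
        rw [habs1, mul_one]
        exact mul_le_mul_of_nonneg_left (ht i hi).le (norm_nonneg _)
    _ = C * (ε / (C + 1)) := by rw [← Finset.sum_mul]
    _ ≤ ε := by
        rw [mul_div_assoc']
        rw [div_le_iff₀ (by linarith)]
        nlinarith

/-- The set of almost periodic functions: the closure, in the Banach space of
bounded continuous functions `ℝ → ℂ` with the sup norm, of the linear span of
the functions `y ↦ exp (I * λ * y)`, `λ ∈ ℝ`. -/
def AlmostPeriodic : Set (BoundedContinuousFunction ℝ ℂ) :=
  closure (Submodule.span ℂ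
    {g : BoundedContinuousFunction ℝ ℂ |
      ∃ lam : ℝ, ∀ y : ℝ, g y = Complex.exp (Complex.I * lam * y)} : Set (BoundedContinuousFunction ℝ ℂ))

theorem stmt_0 (f : BoundedContinuousFunction ℝ ℂ)
    (hf : f ∈ AlmostPeriodic)
    (htop : Filter.Tendsto f Filter.atTop (nhds 0))
    (hbot : Filter.Tendsto f Filter.atBot (nhds 0)) :
    ∀ y : ℝ, f y = 0 := by
  intro y
  rw [← norm_eq_zero]
  by_contra hne
  have hpos : 0 < ‖f y‖ := lt_of_le_of_ne (norm_nonneg _) (Ne.symm hne)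
  set ε := ‖f y‖ with hεdef
  -- get an approximating trig polynomial
  rw [AlmostPeriodic, Metric.mem_closure_iff] at hf
  obtain ⟨g, hgmem, hgdist⟩ := hf (ε / 4) (by linarith)
  -- get M from htop
  have h0 := Metric.tendsto_nhds.mp htop (ε / 4) (by linarith)
  rw [eventually_atTop] at h0
  obtain ⟨M, hM⟩ := h0
  -- translation number
  obtain ⟨t, hTt, ht⟩ := span_translate g hgmem (show (0:ℝ) < ε/8 by linarith) (M - y)
  have hyM : M ≤ y + t := by linarith
  have h1 : dist (f y) (g y) ≤ dist f g := BoundedContinuousFunction.dist_coe_le_dist y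
  have h2 : dist (g y) (g (y + t)) ≤ ε / 8 := by
    rw [dist_comm, Complex.dist_eq]
    exact ht y
  have h3 : dist (g (y + t)) (f (y + t)) ≤ dist f g := by
    rw [dist_comm]
    exact BoundedContinuousFunction.dist_coe_le_dist (y + t)
  have h4 : dist (f (y + t)) 0 < ε / 4 := hM (y + t) hyM
  have : ε = dist (f y) 0 := by
    rw [hεdef, dist_zero_right]
  have tri1 : dist (f y) 0 ≤ dist (f y) (g y) + dist (g y) (g (y + t)) + dist (g (y + t)) 0 :=
    dist_triangle4 _ _ _ _
  have tri2 : dist (g (y + t)) 0 ≤ dist (g (y + t)) (f (y + t)) + dist (f (y + t)) 0 :=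
    dist_triangle _ _ _
  have h1' := lt_of_le_of_lt h1 hgdist
  have h3' := lt_of_le_of_lt h3 hgdist
  have hcon : ε < ε := by
    rw [this]; linarith
  exact absurd hcon (lt_irrefl ε)
end

section
/- Let f_a ∈ L¹(ℝ, ℂ), let (f_k)_{k ∈ ℤ} be an absolutely summable family of complex numbers, and let (t_k)_{k ∈ ℤ} be real numbers. Then the series g = ∑_{k ∈ ℤ} f_k · f_a(· − t_k) converges absolutely in L¹(ℝ, ℂ), and for every y ∈ ℝ the Fourier transform of g satisfies ĝ(y) = f̂_a(y) · ∑_{k ∈ ℤ} f_k e^{−i y t_k}, where f̂_a(y) = ∫_ℝ e^{−iyt} f_a(t) dt. (This expresses that the Fourier transforms of L¹ functions form an ideal in the algebra 𝒜 of sums of such transforms and almost periodic exponential series.) -/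
open MeasureTheory

private lemma coeFn_finset_sum_ae {ι : Type*} (s : Finset ι)
    (T : ι → Lp ℂ 1 (volume : Measure ℝ)) :
    (⇑(∑ k ∈ s, T k) : ℝ → ℂ) =ᵐ[volume] fun x => ∑ k ∈ s, T k x := by
  classical
  induction s using Finset.induction_on with
  | empty => simp only [Finset.sum_empty]; exact Lp.coeFn_zero (E := ℂ) (p := 1) (μ := (volume : Measure ℝ))
  | insert _ _ hk ih =>
    rename_i a s
    rw [Finset.sum_insert hk]
    filter_upwards [Lp.coeFn_add (T a) (∑ k ∈ s, T k), ih] with x hx1 hx2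
    rw [hx1, Pi.add_apply, hx2]
    rw [Finset.sum_insert hk]

theorem stmt_2 (fa : ℝ → ℂ) (hfa : Integrable fa (volume : Measure ℝ))
    (f : ℤ → ℂ) (hf : Summable fun k : ℤ => ‖f k‖) (t : ℤ → ℝ) :
    ∃ g : ℝ → ℂ, Integrable g (volume : Measure ℝ) ∧
      -- absolute convergence of the series in L¹:
      (Summable fun k : ℤ => ∫ x : ℝ, ‖f k * fa (x - t k)‖) ∧
      -- the partial sums converge to g in the L¹ norm:
      Filter.Tendsto
        (fun s : Finset ℤ => ∫ x : ℝ, ‖g x - ∑ k ∈ s, f k * fa (x - t k)‖)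
        Filter.atTop (nhds 0) ∧
      -- the Fourier transform of g is f̂ₐ times the almost periodic series:
      ∀ y : ℝ,
        (∫ x : ℝ, Complex.exp (-(Complex.I * y * x)) * g x) =
          (∫ x : ℝ, Complex.exp (-(Complex.I * y * x)) * fa x) *
            ∑' k : ℤ, f k * Complex.exp (-(Complex.I * y * t k)) := by
  classical
  -- the summands
  set F : ℤ → ℝ → ℂ := fun k x => f k * fa (x - t k) with hFdef
  have hFint : ∀ k : ℤ, Integrable (F k) volume := fun k =>
    ((hfa.comp_sub_right (t k)).const_mul (f k))
  -- norms of summands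
  have hnorm : ∀ k : ℤ, (∫ x : ℝ, ‖F k x‖) = ‖f k‖ * ∫ x : ℝ, ‖fa x‖ := by
    intro k
    have h1 : ∀ x : ℝ, ‖F k x‖ = ‖f k‖ * ‖fa (x - t k)‖ := by
      intro x; simp [hFdef]
    simp_rw [h1]
    rw [integral_const_mul]
    congr 1
    exact integral_sub_right_eq_self (fun x => ‖fa x‖) (t k)
  have hsum : Summable fun k : ℤ => ∫ x : ℝ, ‖F k x‖ := by
    simp_rw [hnorm]
    exact hf.mul_right _
  -- L¹ elements
  set T : ℤ → Lp ℂ 1 (volume : Measure ℝ) := fun k => (hFint k).toL1 (F k) with hTdef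
  have hTnorm : ∀ k, ‖T k‖ = ∫ x : ℝ, ‖F k x‖ := fun k =>
    L1.norm_of_fun_eq_integral_norm (hFint k)
  have hTsum : Summable T := by
    apply Summable.of_norm
    simpa only [hTnorm] using hsum
  set G : Lp ℂ 1 (volume : Measure ℝ) := ∑' k, T k with hGdef
  have hGsum : HasSum T G := hTsum.hasSum
  -- coeFn of partial sums
  have hScoe : ∀ s : Finset ℤ,
      (⇑(∑ k ∈ s, T k) : ℝ → ℂ) =ᵐ[volume] fun x => ∑ k ∈ s, F k x := by
    intro s
    refine (coeFn_finset_sum_ae s T).trans ?_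
    have h : ∀ k ∈ (s : Set ℤ), (⇑(T k) : ℝ → ℂ) =ᵐ[volume] F k := fun k _ => (hFint k).coeFn_toL1
    filter_upwards [(ae_ball_iff s.finite_toSet.countable).2 h] with x hx
    exact Finset.sum_congr rfl fun k hk => hx k hk
  -- key identity: L¹ distance equals the integral of the norm of the difference
  have key : ∀ s : Finset ℤ,
      (∫ x : ℝ, ‖G x - ∑ k ∈ s, F k x‖) = ‖G - ∑ k ∈ s, T k‖ := by
    intro s
    rw [L1.norm_eq_integral_norm]
    refine integral_congr_ae ?_
    filter_upwards [Lp.coeFn_sub G (∑ k ∈ s, T k), hScoe s] with x hx1 hx2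
    rw [hx1, Pi.sub_apply, hx2]
  have hTendsto : Filter.Tendsto
      (fun s : Finset ℤ => ∫ x : ℝ, ‖G x - ∑ k ∈ s, F k x‖) Filter.atTop (nhds 0) := by
    have h0 : Filter.Tendsto (fun s : Finset ℤ => ‖(∑ k ∈ s, T k) - G‖)
        Filter.atTop (nhds 0) := by
      rw [← tendsto_iff_norm_sub_tendsto_zero]
      exact hGsum
    refine h0.congr fun s => ?_
    rw [norm_sub_rev]
    exact (key s).symm
  refine ⟨⇑G, L1.integrable_coeFn G, hsum, hTendsto, ?_⟩
  -- Fourier transform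
  intro y
  set e : ℝ → ℂ := fun x => Complex.exp (-(Complex.I * y * x)) with hedef
  have he_norm : ∀ x : ℝ, ‖e x‖ = 1 := by
    intro x
    show ‖Complex.exp (-(Complex.I * y * x))‖ = 1
    rw [Complex.norm_exp]
    norm_num [Complex.mul_re]
  have he_cont : Continuous e :=
    Complex.continuous_exp.comp ((continuous_const.mul Complex.continuous_ofReal).neg)
  have he_meas : AEStronglyMeasurable e volume := he_cont.aestronglyMeasurable
  have he_bdd : ∃ C, ∀ x, ‖e x‖ ≤ C := ⟨1, fun x => (he_norm x).le⟩
  have heG_int : Integrable (fun x => e x * G x) volume :=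
    (L1.integrable_coeFn G).bdd_mul he_meas (ae_of_all _ fun x => (he_norm x).le)
  have heF_int : ∀ k, Integrable (fun x => e x * F k x) volume := fun k =>
    (hFint k).bdd_mul he_meas (ae_of_all _ fun x => (he_norm x).le)
  -- value of each term's Fourier transform
  have hterm : ∀ k : ℤ, (∫ x : ℝ, e x * F k x) =
      (f k * Complex.exp (-(Complex.I * y * t k))) * ∫ x : ℝ, e x * fa x := by
    intro k
    have h1 : ∀ x : ℝ, e x * F k x = f k * (e x * fa (x - t k)) := by
      intro x; simp [hFdef]; ring
    simp_rw [h1]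
    rw [integral_const_mul]
    have h2 : (∫ x : ℝ, e x * fa (x - t k)) =
        ∫ x : ℝ, e (x + t k) * fa x := by
      rw [← integral_add_right_eq_self (fun x : ℝ => e x * fa (x - t k)) (t k)]
      simp
    rw [h2]
    have h3 : ∀ x : ℝ, e (x + t k) * fa x =
        Complex.exp (-(Complex.I * y * t k)) * (e x * fa x) := by
      intro x
      have h4 : e (x + t k) =
          Complex.exp (-(Complex.I * y * t k)) * e x := by
        show Complex.exp (-(Complex.I * y * ((x + t k : ℝ) : ℂ))) = _
        rw [← Complex.exp_add]
        congr 1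
        push_cast
        ring
      rw [h4, mul_assoc]
    simp_rw [h3]
    rw [integral_const_mul]
    ring
  -- the partial sums of the Fourier transforms converge to that of G
  have hHasSum : HasSum (fun k : ℤ => ∫ x : ℝ, e x * F k x) (∫ x : ℝ, e x * G x) := by
    rw [HasSum]
    have hps : ∀ s : Finset ℤ, (∑ k ∈ s, ∫ x : ℝ, e x * F k x) =
        ∫ x : ℝ, e x * ∑ k ∈ s, F k x := by
      intro s
      rw [← integral_finset_sum s (fun k _ => heF_int k)]
      congr 1; funext x; rw [Finset.mul_sum]
    have hbound : ∀ s : Finset ℤ,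
        ‖(∑ k ∈ s, ∫ x : ℝ, e x * F k x) - ∫ x : ℝ, e x * G x‖ ≤
          ∫ x : ℝ, ‖G x - ∑ k ∈ s, F k x‖ := by
      intro s
      rw [hps]
      have hint : Integrable (fun x : ℝ => e x * ∑ k ∈ s, F k x) volume :=
        (integrable_finset_sum s fun k _ => hFint k).bdd_mul he_meas (ae_of_all _ fun x => (he_norm x).le)
      rw [← integral_sub hint heG_int]
      calc ‖∫ x : ℝ, (e x * ∑ k ∈ s, F k x - e x * G x)‖
          ≤ ∫ x : ℝ, ‖e x * ∑ k ∈ s, F k x - e x * G x‖ :=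
            norm_integral_le_integral_norm _
        _ = ∫ x : ℝ, ‖G x - ∑ k ∈ s, F k x‖ := by
            congr 1; funext x
            rw [← mul_sub, norm_mul, he_norm, one_mul, norm_sub_rev]
    have h0 : Filter.Tendsto
        (fun s : Finset ℤ => ‖(∑ k ∈ s, ∫ x : ℝ, e x * F k x) - ∫ x : ℝ, e x * G x‖)
        Filter.atTop (nhds 0) :=
      squeeze_zero (fun s => norm_nonneg _) hbound hTendsto
    exact tendsto_iff_norm_sub_tendsto_zero.mpr h0
  have := hHasSum.tsum_eq
  rw [← this]
  simp_rw [hterm]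
  rw [tsum_mul_right, mul_comm]
end

section
/- Let S be a set and let n₁, d₁, n₂, d₂ : S → ℂ be functions such that |n₂(x)|² + |d₂(x)|² = 1 for all x ∈ S. Then for every function q : S → ℂ, sup_{x ∈ S} √(|n₁(x) − n₂(x)q(x)|² + |d₁(x) − d₂(x)q(x)|²) ≥ sup_{x ∈ S} |n₂(x)·d₁(x) − d₂(x)·n₁(x)| (as an inequality in [0, ∞], i.e., using extended-real suprema or assuming all functions are bounded). -/
theorem stmt_5 (S : Type*) (n₁ d₁ n₂ d₂ : S → ℂ)
    (hnorm : ∀ x : S, ‖n₂ x‖ ^ 2 + ‖d₂ x‖ ^ 2 = 1)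
    (q : S → ℂ) :
    (⨆ x : S, ENNReal.ofReal
        (Real.sqrt (‖n₁ x - n₂ x * q x‖ ^ 2 +
          ‖d₁ x - d₂ x * q x‖ ^ 2))) ≥
      ⨆ x : S, ENNReal.ofReal (‖n₂ x * d₁ x - d₂ x * n₁ x‖) := by
  refine iSup_mono fun x => ENNReal.ofReal_le_ofReal ?_
  set a := ‖n₂ x‖ with ha
  set b := ‖d₂ x‖ with hb
  set c := ‖d₁ x - d₂ x * q x‖ with hc
  set e := ‖n₁ x - n₂ x * q x‖ with he
  have key : n₂ x * d₁ x - d₂ x * n₁ x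
      = n₂ x * (d₁ x - d₂ x * q x) - d₂ x * (n₁ x - n₂ x * q x) := by ring
  have h1 : ‖n₂ x * d₁ x - d₂ x * n₁ x‖ ≤ a * c + b * e := by
    rw [key]
    refine (norm_sub_le _ _).trans ?_
    simp [ha, hb, hc, he, map_mul]
  refine h1.trans ?_
  have hn := hnorm x
  rw [← ha, ← hb] at hn
  have hanon : 0 ≤ a := norm_nonneg _
  have hbnon : 0 ≤ b := norm_nonneg _
  have hcnon : 0 ≤ c := norm_nonneg _
  have henon : 0 ≤ e := norm_nonneg _
  refine (Real.le_sqrt (by positivity) (by positivity)).2 ?_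
  nlinarith [sq_nonneg (a*e - b*c), sq_nonneg (a*c - b*e)]
end

section
/- Let 1/√2 < r < 1 and let 0 < ρ < 1. Then there exists z ∈ ℂ with ρ < |z| < 1 such that r² e^{−2 Re((1+z)/(1−z))} − (1 − r²) = 0. Consequently, the function z ↦ r² e^{−2Re((1+z)/(1−z))} − (1−r²) is not invertible in the Banach algebra of bounded continuous functions on the annulus 𝔸_ρ = {z ∈ ℂ : ρ < |z| < 1}. -/
theorem stmt_13 (r : ℝ) (hr1 : 1 / Real.sqrt 2 < r) (hr2 : r < 1)
    (ρ : ℝ) (hρ0 : 0 < ρ) (hρ1 : ρ < 1) :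
    -- the function (G₁*G₂)∘φ has a zero in the annulus ρ < |z| < 1
    (∃ z : ℂ, ρ < ‖z‖ ∧ ‖z‖ < 1 ∧
      r ^ 2 * Real.exp (-2 * ((1 + z) / (1 - z)).re) - (1 - r ^ 2) = 0) ∧
    -- consequently it is not invertible in the Banach algebra of bounded
    -- continuous functions on the annulus 𝔸_ρ
    ¬ ∃ g : BoundedContinuousFunction {z : ℂ // ρ < ‖z‖ ∧ ‖z‖ < 1} ℂ,
        ∀ z : {z : ℂ // ρ < ‖z‖ ∧ ‖z‖ < 1},
          ((r ^ 2 * Real.exp (-2 * ((1 + (z : ℂ)) / (1 - (z : ℂ))).re) - (1 - r ^ 2) : ℝ) : ℂ) *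
              g z = 1 := by
  have hs2 : (0:ℝ) < Real.sqrt 2 := Real.sqrt_pos.2 (by norm_num)
  have hr0 : (0:ℝ) < r := lt_trans (by positivity) hr1
  have hrsq : (1:ℝ)/2 < r^2 := by
    have h : (1/Real.sqrt 2)^2 < r^2 := by
      apply pow_lt_pow_left₀ hr1 (by positivity)
      norm_num
    have h2 : (1/Real.sqrt 2)^2 = 1/2 := by
      rw [div_pow, one_pow, Real.sq_sqrt (by norm_num : (0:ℝ) ≤ 2)]
    linarith
  have ha : (0:ℝ) < 1 - r^2 := by nlinarith
  set a := 1 - r^2 with hadef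
  have haltr : a < r^2 := by rw [hadef]; nlinarith
  set c := Real.log (r^2 / a) / 2 with hc
  have hc0 : 0 < c := by
    apply div_pos _ (by norm_num)
    apply Real.log_pos
    rw [lt_div_iff₀ ha]
    linarith
  have hρsq : ρ^2 < 1 := by nlinarith
  set y := (c+1) / Real.sqrt (1 - ρ^2) with hy
  have hy2 : y^2 * (1 - ρ^2) = (c+1)^2 := by
    rw [hy, div_pow, Real.sq_sqrt (by nlinarith : (0:ℝ) ≤ 1 - ρ^2),
      div_mul_cancel₀ _ (by nlinarith : (1:ℝ) - ρ^2 ≠ 0)]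
  set w : ℂ := ⟨c, y⟩ with hw
  have hw1 : w + 1 ≠ 0 := by
    intro h
    have h2 := congrArg Complex.re h
    simp [hw] at h2
    linarith
  set z : ℂ := (w - 1)/(w + 1) with hz
  have h1z : 1 - z = 2/(w+1) := by
    rw [hz]; field_simp; ring
  have h2z : 1 + z = 2*w/(w+1) := by
    rw [hz]; field_simp; ring
  have hphi : (1 + z)/(1 - z) = w := by
    rw [h1z, h2z]
    field_simp
  have hre : ((1 + z)/(1 - z)).re = c := by rw [hphi]
  have hD : (0:ℝ) < (c+1)^2 + y^2 := by positivity
  have hnormSq : Complex.normSq z = ((c-1)^2 + y^2)/((c+1)^2 + y^2) := by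
    rw [hz, map_div₀]
    congr 1 <;> simp [Complex.normSq_apply, hw] <;> ring
  have habs : ‖z‖ = Real.sqrt (((c-1)^2 + y^2)/((c+1)^2 + y^2)) := by
    rw [Complex.norm_def, hnormSq]
  have hlow : ρ < ‖z‖ := by
    rw [habs, show ρ = Real.sqrt (ρ^2) by rw [Real.sqrt_sq hρ0.le]]
    apply Real.sqrt_lt_sqrt (by positivity)
    rw [lt_div_iff₀ hD]
    nlinarith [sq_nonneg (c-1)]
  have hhigh : ‖z‖ < 1 := by
    rw [habs, show (1:ℝ) = Real.sqrt 1 from (Real.sqrt_one).symm]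
    apply Real.sqrt_lt_sqrt (by positivity)
    rw [Real.sqrt_one] at *
    rw [div_lt_one hD]
    nlinarith
  have hexp : Real.exp (-2 * c) = a / r^2 := by
    have : -2 * c = Real.log (a / r^2) := by
      rw [hc]
      rw [show a / r^2 = (r^2 / a)⁻¹ by rw [inv_div], Real.log_inv]
      ring
    rw [this, Real.exp_log (by positivity)]
  have hzero : r ^ 2 * Real.exp (-2 * ((1 + z) / (1 - z)).re) - (1 - r ^ 2) = 0 := by
    rw [hre, hexp, ← hadef]
    field_simp
    ring
  refine ⟨⟨z, hlow, hhigh, hzero⟩, ?_⟩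
  rintro ⟨g, hg⟩
  have := hg ⟨z, hlow, hhigh⟩
  simp only [Subtype.coe_mk] at this
  rw [hzero] at this
  simp at this
end
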